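/- Let R be a commutative ring and A a bialgebra over R whose shear map sh_A is bijective, with inverse σ : A ⊗[R] A → A ⊗[R] A. Then the R-linear map S : A → A defined by S(a) := (ε ⊗ id_A)(σ(a ⊗ 1)) (where ε ⊗ id_A : A ⊗[R] A → R ⊗[R] A ≅ A) is an antipode for A, so A is a Hopf algebra over R. -/

import Mathlib

open TensorProduct

variable (R A : Type*) [CommRing R] [Ring A] [Bialgebra R A]

/-- The shear map of a bialgebra `A` over `R`: the `R`-linear endomorphism of `A ⊗[R] A`
determined by `a ⊗ b ↦ Σ a₍₁₎ ⊗ a₍₂₎·b`. -/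
noncomputable def shearMap : A ⊗[R] A →ₗ[R] A ⊗[R] A :=
  (LinearMap.mul' R A).lTensor A ∘ₗ (TensorProduct.assoc R A A A).toLinearMap ∘ₗ
    (Coalgebra.comul (R := R) (A := A)).rTensor A

/-- The candidate antipode `S(a) := (ε ⊗ id_A)(σ(a ⊗ 1))` built from an inverse `σ` of the
shear map, where `ε ⊗ id_A : A ⊗[R] A → R ⊗[R] A ≅ A`. -/
noncomputable def antipodeOfShearMapInv (σ : A ⊗[R] A →ₗ[R] A ⊗[R] A) : A →ₗ[R] A :=
  (TensorProduct.lid R A).toLinearMap ∘ₗ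
    (Coalgebra.counit (R := R) (A := A)).rTensor A ∘ₗ σ ∘ₗ (TensorProduct.mk R A A).flip 1

open Coalgebra

/-- `ε ⊗ id` followed by `lid`. -/
noncomputable def epsId : A ⊗[R] A →ₗ[R] A :=
  (TensorProduct.lid R A).toLinearMap ∘ₗ (Coalgebra.counit (R := R) (A := A)).rTensor A

variable {R A}

lemma epsId_tmul (a b : A) : epsId R A (a ⊗ₜ[R] b) = counit (R := R) a • b := by
  simp [epsId]

lemma antipodeOfShearMapInv_apply (σ : A ⊗[R] A →ₗ[R] A ⊗[R] A) (a : A) :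
    antipodeOfShearMapInv R A σ a = epsId R A (σ (a ⊗ₜ[R] 1)) := by
  simp [antipodeOfShearMapInv, epsId]

lemma sh_tmul {ι : Type*} (a b : A) (r : Coalgebra.Repr R a ι) :
    shearMap R A (a ⊗ₜ[R] b) = ∑ i ∈ r.index, r.left i ⊗ₜ[R] (r.right i * b) := by
  simp [shearMap, ← r.eq, TensorProduct.sum_tmul, map_sum, LinearMap.mul'_apply]

lemma sh_one (a : A) : shearMap R A (a ⊗ₜ[R] 1) = comul a := by
  rw [sh_tmul a 1 (ℛ R a)]
  simp [(ℛ R a).eq]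

lemma sum_counit_smul {ι : Type*} {a : A} (r : Coalgebra.Repr R a ι) :
    ∑ i ∈ r.index, counit (R := R) (r.left i) • r.right i = a := by
  have h := congrArg (TensorProduct.lid R A) (Coalgebra.sum_counit_tmul_eq r)
  simp only [map_sum, TensorProduct.lid_tmul, one_smul] at h
  exact h

lemma sum_smul_counit {ι : Type*} {a : A} (r : Coalgebra.Repr R a ι) :
    ∑ i ∈ r.index, counit (R := R) (r.right i) • r.left i = a := by
  have h := congrArg (TensorProduct.rid R A) (Coalgebra.sum_tmul_counit_eq r)
  simp only [map_sum, TensorProduct.rid_tmul, one_smul] at h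
  exact h

lemma epsId_sh (x : A ⊗[R] A) : epsId R A (shearMap R A x) = LinearMap.mul' R A x := by
  induction x using TensorProduct.induction_on with
  | zero => simp
  | tmul a b =>
      rw [sh_tmul a b (ℛ R a)]
      simp only [map_sum, epsId_tmul, LinearMap.mul'_apply, ← smul_mul_assoc]
      rw [← Finset.sum_mul, _root_.sum_counit_smul (ℛ R a)]
  | add x y hx hy => simp [map_add, hx, hy]

lemma sh_mulRight (b : A) (x : A ⊗[R] A) :
    shearMap R A ((LinearMap.mulRight R b).lTensor A x) =
      (LinearMap.mulRight R b).lTensor A (shearMap R A x) := by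
  induction x using TensorProduct.induction_on with
  | zero => simp
  | tmul a c =>
      simp only [LinearMap.lTensor_tmul, LinearMap.mulRight_apply]
      rw [sh_tmul a (c * b) (ℛ R a), sh_tmul a c (ℛ R a)]
      simp [map_sum, mul_assoc]
  | add x y hx hy => simp [map_add, hx, hy]

lemma C2 (x : A ⊗[R] A) :
    (TensorProduct.assoc R A A A)
        ((comul (R := R) (A := A)).rTensor A (shearMap R A x)) =
      (shearMap R A).lTensor A
        ((TensorProduct.assoc R A A A) ((comul (R := R) (A := A)).rTensor A x)) := by
  induction x using TensorProduct.induction_on with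
  | zero => simp
  | tmul a b =>
      set r := ℛ R a with hr
      set r1 : (i : r.ι) → Coalgebra.Repr R (r.left i) (A × A) := fun i => ℛ R (r.left i)
      set r2 : (i : r.ι) → Coalgebra.Repr R (r.right i) (A × A) := fun i => ℛ R (r.right i)
      have lhs_eq : (TensorProduct.assoc R A A A)
          ((comul (R := R) (A := A)).rTensor A (shearMap R A (a ⊗ₜ[R] b))) =
          ∑ i ∈ r.index, ∑ j ∈ (r1 i).index,
            (r1 i).left j ⊗ₜ[R] ((r1 i).right j ⊗ₜ[R] (r.right i * b)) := by
        rw [sh_tmul a b r, map_sum, map_sum]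
        refine Finset.sum_congr rfl fun i _ => ?_
        rw [LinearMap.rTensor_tmul, ← (r1 i).eq, TensorProduct.sum_tmul, map_sum]
        simp
      have rhs_eq : (shearMap R A).lTensor A
          ((TensorProduct.assoc R A A A) ((comul (R := R) (A := A)).rTensor A (a ⊗ₜ[R] b))) =
          ∑ i ∈ r.index, ∑ j ∈ (r2 i).index,
            r.left i ⊗ₜ[R] ((r2 i).left j ⊗ₜ[R] ((r2 i).right j * b)) := by
        rw [LinearMap.rTensor_tmul, ← r.eq, TensorProduct.sum_tmul, map_sum, map_sum]
        refine Finset.sum_congr rfl fun i _ => ?_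
        rw [TensorProduct.assoc_tmul, LinearMap.lTensor_tmul, sh_tmul (r.right i) b (r2 i)]
        simp [TensorProduct.tmul_sum]
      rw [lhs_eq, rhs_eq]
      simpa using Coalgebra.sum_map_tmul_tmul_eq (LinearMap.id (R := R) (M := A))
        (LinearMap.id (R := R) (M := A)) (LinearMap.mulRight R b) a
        (repr := r) (a₁ := r1) (a₂ := r2) |>.symm
  | add x y hx hy => simp only [map_add, hx, hy]

lemma Psi (x : A ⊗[R] A) :
    LinearMap.mul' R A ((epsId R A).lTensor A
      ((TensorProduct.assoc R A A A) ((comul (R := R) (A := A)).rTensor A x))) =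
    LinearMap.mul' R A x := by
  induction x using TensorProduct.induction_on with
  | zero => simp
  | tmul u v =>
      set s := ℛ R u with hs
      rw [LinearMap.rTensor_tmul, ← s.eq, TensorProduct.sum_tmul, map_sum, map_sum, map_sum]
      simp only [TensorProduct.assoc_tmul, LinearMap.lTensor_tmul, epsId_tmul,
        LinearMap.mul'_apply, mul_smul_comm, ← smul_mul_assoc]
      rw [← Finset.sum_mul, sum_smul_counit s]
  | add x y hx hy => simp [map_add, hx, hy]

variable {σ : A ⊗[R] A →ₗ[R] A ⊗[R] A}

lemma σ_sh (hσ₁ : σ ∘ₗ shearMap R A = LinearMap.id) (x : A ⊗[R] A) :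
    σ (shearMap R A x) = x := by
  simpa using LinearMap.congr_fun hσ₁ x

lemma sh_σ (hσ₂ : shearMap R A ∘ₗ σ = LinearMap.id) (x : A ⊗[R] A) :
    shearMap R A (σ x) = x := by
  simpa using LinearMap.congr_fun hσ₂ x

lemma σ_comul (hσ₁ : σ ∘ₗ shearMap R A = LinearMap.id) (a : A) : σ (comul (R := R) a) = a ⊗ₜ[R] 1 := by
  rw [← sh_one a, σ_sh hσ₁]

lemma σ_mulRight (hσ₁ : σ ∘ₗ shearMap R A = LinearMap.id)
    (hσ₂ : shearMap R A ∘ₗ σ = LinearMap.id) (b : A) (x : A ⊗[R] A) :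
    (LinearMap.mulRight R b).lTensor A (σ x) = σ ((LinearMap.mulRight R b).lTensor A x) := by
  conv_rhs => rw [← sh_σ hσ₂ x, ← sh_mulRight, σ_sh hσ₁]

lemma mul'_σ (hσ₂ : shearMap R A ∘ₗ σ = LinearMap.id) (x : A ⊗[R] A) : LinearMap.mul' R A (σ x) = epsId R A x := by
  conv_rhs => rw [← sh_σ hσ₂ x, epsId_sh]

lemma C2σ (hσ₁ : σ ∘ₗ shearMap R A = LinearMap.id)
    (hσ₂ : shearMap R A ∘ₗ σ = LinearMap.id) (x : A ⊗[R] A) :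
    (TensorProduct.assoc R A A A) ((comul (R := R) (A := A)).rTensor A (σ x)) =
      σ.lTensor A ((TensorProduct.assoc R A A A) ((comul (R := R) (A := A)).rTensor A x)) := by
  have h := C2 (σ x)
  rw [sh_σ hσ₂ x] at h
  have h2 := congrArg (σ.lTensor A) h
  rw [← LinearMap.comp_apply (σ.lTensor A) ((shearMap R A).lTensor A),
    ← LinearMap.lTensor_comp, hσ₁, LinearMap.lTensor_id, LinearMap.id_apply] at h2
  exact h2.symm

/-- If the shear map of a bialgebra `A` over a commutative ring `R` is bijective with inverse
`σ`, then `S(a) := (ε ⊗ id_A)(σ(a ⊗ 1))` is an antipode for `A`, so `A` is a Hopf algebra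
over `R`. -/
theorem antipodeOfShearMapInv_is_antipode (σ : A ⊗[R] A →ₗ[R] A ⊗[R] A)
    (hσ₁ : σ ∘ₗ shearMap R A = LinearMap.id) (hσ₂ : shearMap R A ∘ₗ σ = LinearMap.id) :
    (LinearMap.mul' R A ∘ₗ (antipodeOfShearMapInv R A σ).rTensor A ∘ₗ Coalgebra.comul =
        Algebra.linearMap R A ∘ₗ Coalgebra.counit ∧
      LinearMap.mul' R A ∘ₗ (antipodeOfShearMapInv R A σ).lTensor A ∘ₗ Coalgebra.comul =
        Algebra.linearMap R A ∘ₗ Coalgebra.counit) ∧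
    Nonempty (HopfAlgebra R A) := by
  set S := antipodeOfShearMapInv R A σ with hS
  have goal1 : LinearMap.mul' R A ∘ₗ S.rTensor A ∘ₗ Coalgebra.comul =
      Algebra.linearMap R A ∘ₗ Coalgebra.counit := by
    ext a
    set r := ℛ R a with hr
    simp only [LinearMap.comp_apply, Algebra.linearMap_apply, Algebra.algebraMap_eq_smul_one]
    rw [← r.eq, map_sum, map_sum]
    have step : ∀ i ∈ r.index, LinearMap.mul' R A (S.rTensor A (r.left i ⊗ₜ[R] r.right i)) =
        epsId R A (σ (r.left i ⊗ₜ[R] r.right i)) := by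
      intro i _
      rw [LinearMap.rTensor_tmul, LinearMap.mul'_apply, hS, antipodeOfShearMapInv_apply]
      have h1 : epsId R A (σ (r.left i ⊗ₜ[R] 1)) * r.right i =
          epsId R A ((LinearMap.mulRight R (r.right i)).lTensor A (σ (r.left i ⊗ₜ[R] 1))) := by
        generalize σ (r.left i ⊗ₜ[R] 1) = y
        induction y using TensorProduct.induction_on with
        | zero => simp
        | tmul u v => simp [epsId_tmul, smul_mul_assoc]
        | add x y hx hy => simp [map_add, add_mul, hx, hy]
      rw [h1, σ_mulRight hσ₁ hσ₂]
      simp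
    rw [Finset.sum_congr rfl step, ← map_sum, ← map_sum, r.eq, σ_comul hσ₁,
      epsId_tmul]
  have goal2 : LinearMap.mul' R A ∘ₗ S.lTensor A ∘ₗ Coalgebra.comul =
      Algebra.linearMap R A ∘ₗ Coalgebra.counit := by
    ext a
    set r := ℛ R a with hr
    simp only [LinearMap.comp_apply, Algebra.linearMap_apply, Algebra.algebraMap_eq_smul_one]
    have key := congrArg (fun y => LinearMap.mul' R A ((epsId R A).lTensor A y))
      (C2σ hσ₁ hσ₂ (a ⊗ₜ[R] 1))
    rw [Psi (σ (a ⊗ₜ[R] 1)), mul'_σ hσ₂, epsId_tmul] at key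
    rw [LinearMap.rTensor_tmul, ← r.eq, TensorProduct.sum_tmul, map_sum, map_sum, map_sum] at key
    simp only [TensorProduct.assoc_tmul, LinearMap.lTensor_tmul] at key
    rw [map_sum] at key
    rw [← r.eq, map_sum, map_sum, key]
    refine Finset.sum_congr rfl fun i _ => ?_
    rw [LinearMap.lTensor_tmul, LinearMap.mul'_apply, hS, antipodeOfShearMapInv_apply]
    simp [epsId]
  refine ⟨⟨goal1, goal2⟩, ⟨{ antipode := S
                             mul_antipode_rTensor_comul := goal1
                             mul_antipode_lTensor_comul := goal2 }⟩⟩
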